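/- arXiv:2203.03011 — 2 statements merged into one kernel-verified Lean document; each statement's English description precedes it below -/
import Mathlib

section
/- On ℝⁿ \ {0}, the vector field x ↦ ‖x‖^{4−2n}·dφₓ applied componentwise to the inversion φ(x) = x/‖x‖² is divergence-free: for each component i, div(‖x‖^{4−2n} ∇φᵢ)(x) = 0, where φᵢ(x) = xᵢ/‖x‖². Hence the inversion is p(·)-harmonic for the weight ‖x‖^{4−2n}. -/
open InnerProductSpace

lemma grad_eq (n : ℕ) (i : Fin n) (y : EuclideanSpace ℝ (Fin n)) (hy : y ≠ 0) :
    gradient (fun z : EuclideanSpace ℝ (Fin n) => z i / ‖z‖ ^ 2) y =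
      (‖y‖ ^ 2)⁻¹ • EuclideanSpace.single i 1 - (2 * y i / ‖y‖ ^ 4) • y := by
  have hny : ‖y‖ ≠ 0 := norm_ne_zero_iff.mpr hy
  have hny2 : (‖y‖ : ℝ) ^ 2 ≠ 0 := pow_ne_zero _ hny
  have hnum : HasFDerivAt (fun z : EuclideanSpace ℝ (Fin n) => z i)
      (EuclideanSpace.proj i : EuclideanSpace ℝ (Fin n) →L[ℝ] ℝ) y :=
    by simpa using (EuclideanSpace.proj (𝕜 := ℝ) i).hasFDerivAt
  have hden : HasFDerivAt (fun z : EuclideanSpace ℝ (Fin n) => ‖z‖ ^ 2)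
      (2 • (innerSL ℝ y)) y := (hasStrictFDerivAt_norm_sq y).hasFDerivAt
  have hinv : HasFDerivAt (fun z : EuclideanSpace ℝ (Fin n) => (‖z‖ ^ 2)⁻¹)
      ((-((‖y‖ ^ 2) ^ 2)⁻¹) • (2 • (innerSL ℝ y))) y :=
    (hasDerivAt_inv hny2).comp_hasFDerivAt y hden
  have hdiv := hnum.mul hinv
  have hD : ((fun z : EuclideanSpace ℝ (Fin n) => z i) y •
        ((-((‖y‖ ^ 2) ^ 2)⁻¹) • (2 • (innerSL ℝ y))) +
        (fun z : EuclideanSpace ℝ (Fin n) => (‖z‖ ^ 2)⁻¹) y •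
        (EuclideanSpace.proj i : EuclideanSpace ℝ (Fin n) →L[ℝ] ℝ))
      = (toDual ℝ (EuclideanSpace ℝ (Fin n)))
          ((‖y‖ ^ 2)⁻¹ • EuclideanSpace.single i 1 - (2 * y i / ‖y‖ ^ 4) • y) := by
    ext v
    simp [ContinuousLinearMap.smul_apply, inner_sub_left, inner_smul_left,
      EuclideanSpace.inner_single_left, real_inner_comm y v, div_eq_mul_inv]
    field_simp
    ring
  rw [hD] at hdiv
  have h2 : gradient (fun z : EuclideanSpace ℝ (Fin n) => z i * (‖z‖ ^ 2)⁻¹) y =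
      (‖y‖ ^ 2)⁻¹ • EuclideanSpace.single i 1 - (2 * y i / ‖y‖ ^ 4) • y :=
    (hasGradientAt_iff_hasFDerivAt.mpr hdiv).gradient
  simpa [div_eq_mul_inv] using h2

lemma Feq (n : ℕ) (i : Fin n) (y : EuclideanSpace ℝ (Fin n)) (hy : y ≠ 0) :
    ‖y‖ ^ ((4 : ℝ) - 2 * n) • gradient (fun z : EuclideanSpace ℝ (Fin n) => z i / ‖z‖ ^ 2) y =
      (‖y‖ ^ 2) ^ ((1 : ℤ) - n) • EuclideanSpace.single i 1
        - (2 * y i * (‖y‖ ^ 2) ^ (-(n : ℤ))) • y := by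
  have hny : ‖y‖ ≠ 0 := norm_ne_zero_iff.mpr hy
  have hr : ‖y‖ ^ ((4 : ℝ) - 2 * n) = ‖y‖ ^ ((4 : ℤ) - 2 * n) := by
    rw [show ((4:ℝ) - 2 * (n:ℝ)) = (((4 - 2 * n : ℤ)) : ℝ) by push_cast; ring,
      Real.rpow_intCast]
  have h1 : ‖y‖ ^ ((4 : ℤ) - 2 * n) * (‖y‖ ^ 2)⁻¹ = (‖y‖ ^ 2) ^ ((1 : ℤ) - n) := by
    rw [← zpow_natCast ‖y‖ 2, ← zpow_neg, ← zpow_mul, ← zpow_add₀ hny]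
    congr 1
    push_cast; ring
  have h2' : ‖y‖ ^ ((4 : ℤ) - 2 * n) * (‖y‖ ^ 4)⁻¹ = (‖y‖ ^ 2) ^ (-(n : ℤ)) := by
    rw [← zpow_natCast ‖y‖ 4, ← zpow_neg, ← zpow_natCast ‖y‖ 2, ← zpow_mul, ← zpow_add₀ hny]
    congr 1
    push_cast; ring
  have h2 : ‖y‖ ^ ((4 : ℤ) - 2 * n) * (2 * y i / ‖y‖ ^ 4) =
      2 * y i * (‖y‖ ^ 2) ^ (-(n : ℤ)) := by
    rw [← h2']; ring
  rw [grad_eq n i y hy, smul_sub, smul_smul, smul_smul, hr, h1, h2]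
/-- The inversion `φ(x) = x/‖x‖²` is `p(·)`-harmonic for the weight `‖x‖^{4−2n}`:
for each component `i`, the Euclidean divergence of `‖x‖^{4−2n} ∇φᵢ` vanishes on
`ℝⁿ \ {0}`. -/
theorem stmt_8 (n : ℕ) (x : EuclideanSpace ℝ (Fin n)) (hx : x ≠ 0) (i : Fin n) :
    ∑ j, fderiv ℝ
        (fun y : EuclideanSpace ℝ (Fin n) =>
          ‖y‖ ^ ((4 : ℝ) - 2 * n) • gradient (fun z : EuclideanSpace ℝ (Fin n) => z i / ‖z‖ ^ 2) y)
        x (EuclideanSpace.single j 1) j = 0 := by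
  classical
  have hnx : ‖x‖ ≠ 0 := norm_ne_zero_iff.mpr hx
  have hA : (‖x‖ : ℝ) ^ 2 ≠ 0 := pow_ne_zero _ hnx
  have hden : HasFDerivAt (fun z : EuclideanSpace ℝ (Fin n) => ‖z‖ ^ 2)
      (2 • (innerSL ℝ x)) x := (hasStrictFDerivAt_norm_sq x).hasFDerivAt
  have hz1 : HasFDerivAt (fun y : EuclideanSpace ℝ (Fin n) => (‖y‖ ^ 2) ^ ((1 : ℤ) - n))
      (((((1 - (n:ℤ)) : ℤ) : ℝ) * (‖x‖ ^ 2) ^ ((1 : ℤ) - n - 1)) • (2 • (innerSL ℝ x))) x :=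
    by have := (hasDerivAt_zpow ((1 : ℤ) - n) (‖x‖ ^ 2) (Or.inl hA)).comp_hasFDerivAt x hden; exact this
  have hz2 : HasFDerivAt (fun y : EuclideanSpace ℝ (Fin n) => (‖y‖ ^ 2) ^ (-(n : ℤ)))
      (((((-(n:ℤ)) : ℤ) : ℝ) * (‖x‖ ^ 2) ^ (-(n : ℤ) - 1)) • (2 • (innerSL ℝ x))) x :=
    by have := (hasDerivAt_zpow (-(n : ℤ)) (‖x‖ ^ 2) (Or.inl hA)).comp_hasFDerivAt x hden; exact this
  have hproj : HasFDerivAt (fun z : EuclideanSpace ℝ (Fin n) => z i)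
      (EuclideanSpace.proj i : EuclideanSpace ℝ (Fin n) →L[ℝ] ℝ) x :=
    by simpa using (EuclideanSpace.proj (𝕜 := ℝ) i).hasFDerivAt
  have hc := ((hproj.const_mul 2).mul hz2)
  have hG1 := hz1.smul_const (EuclideanSpace.single i (1:ℝ))
  have hG2 : HasFDerivAt
      (fun y : EuclideanSpace ℝ (Fin n) => (2 * y i * (‖y‖ ^ 2) ^ (-(n:ℤ))) • y)
      ((2 * x i * (‖x‖ ^ 2) ^ (-(n:ℤ))) • ContinuousLinearMap.id ℝ (EuclideanSpace ℝ (Fin n)) +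
        ((2 * x i) • ((((-(n:ℤ) : ℤ)) : ℝ) * (‖x‖ ^ 2) ^ (-(n:ℤ) - 1)) • 2 • (innerSL ℝ) x +
              (‖x‖ ^ 2) ^ (-(n:ℤ)) • (2:ℝ) • EuclideanSpace.proj i).smulRight x) x :=
    hc.smul (hasFDerivAt_id x)
  have hG : HasFDerivAt (fun y : EuclideanSpace ℝ (Fin n) =>
      (‖y‖ ^ 2) ^ ((1 : ℤ) - n) • EuclideanSpace.single i 1
        - (2 * y i * (‖y‖ ^ 2) ^ (-(n : ℤ))) • y) _ x := hG1.sub hG2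
  have hev : (fun y : EuclideanSpace ℝ (Fin n) =>
        ‖y‖ ^ ((4 : ℝ) - 2 * n) • gradient (fun z : EuclideanSpace ℝ (Fin n) => z i / ‖z‖ ^ 2) y)
      =ᶠ[nhds x] (fun y : EuclideanSpace ℝ (Fin n) =>
        (‖y‖ ^ 2) ^ ((1 : ℤ) - n) • EuclideanSpace.single i 1
          - (2 * y i * (‖y‖ ^ 2) ^ (-(n : ℤ))) • y) := by
    filter_upwards [eventually_ne_nhds hx] with y hy using Feq n i y hy
  rw [hev.fderiv_eq, hG.fderiv]
  simp only [ContinuousLinearMap.coe_sub', Pi.sub_apply, ContinuousLinearMap.smulRight_apply,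
    ContinuousLinearMap.add_apply, ContinuousLinearMap.smul_apply, ContinuousLinearMap.coe_smul',
    Pi.smul_apply, innerSL_apply_apply, ContinuousLinearMap.id_apply,
    smul_eq_mul, PiLp.smul_apply, PiLp.sub_apply, PiLp.add_apply]
  simp only [EuclideanSpace.inner_single_right, EuclideanSpace.single_apply, PiLp.proj_apply,
    map_one, one_mul, mul_one, smul_eq_mul, RCLike.star_def, conj_trivial,
    mul_ite, ite_mul, mul_zero, zero_mul]
  simp only [nsmul_eq_mul, Nat.cast_ofNat, if_true, eq_self_iff_true]
  have hsq : ∑ j, x j * x j = ‖x‖ ^ 2 := by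
    rw [← real_inner_self_eq_norm_sq]
    simp only [PiLp.inner_apply, RCLike.inner_apply, conj_trivial, mul_comm]
  have hterm : ∀ j : Fin n,
      ((if j = i then ((1 - (n:ℤ) : ℤ) : ℝ) * (‖x‖ ^ 2) ^ ((1:ℤ) - n - 1) * (2 * x j) else 0) -
        ((2 * x i * (‖x‖ ^ 2) ^ (-(n:ℤ))) +
          (2 * x i * ((((-(n:ℤ)) : ℤ) : ℝ) * (‖x‖ ^ 2) ^ (-(n:ℤ) - 1) * (2 * x j)) +
            if i = j then (‖x‖ ^ 2) ^ (-(n:ℤ)) * 2 else 0) * x j))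
      = ((if j = i then ((1 - (n:ℤ) : ℤ) : ℝ) * (‖x‖ ^ 2) ^ ((1:ℤ) - n - 1) * (2 * x j) else 0)
          + (if j = i then -((‖x‖ ^ 2) ^ (-(n:ℤ)) * 2 * x j) else 0))
        + (-(2 * x i * (‖x‖ ^ 2) ^ (-(n:ℤ)))
          + -(2 * x i * ((((-(n:ℤ)) : ℤ) : ℝ) * (‖x‖ ^ 2) ^ (-(n:ℤ) - 1) * 2) * (x j * x j))) := by
    intro j
    rcases eq_or_ne j i with h | h
    · subst h; simp only [eq_self_iff_true, if_true]; ring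
    · simp only [if_neg h, if_neg (Ne.symm h)]; ring
  rw [Finset.sum_congr rfl (fun j _ => hterm j)]
  have h4 : ∑ j : Fin n,
      -(2 * x i * ((((-(n:ℤ)) : ℤ) : ℝ) * (‖x‖ ^ 2) ^ (-(n:ℤ) - 1) * 2) * (x j * x j))
      = -(2 * x i * ((((-(n:ℤ)) : ℤ) : ℝ) * (‖x‖ ^ 2) ^ (-(n:ℤ) - 1) * 2) * ‖x‖ ^ 2) := by
    rw [Finset.sum_neg_distrib, ← Finset.mul_sum, hsq]
  rw [Finset.sum_add_distrib, Finset.sum_add_distrib, Finset.sum_add_distrib,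
    Finset.sum_ite_eq' Finset.univ i, Finset.sum_ite_eq' Finset.univ i, h4,
    Finset.sum_neg_distrib, Finset.sum_const, Finset.card_univ, Fintype.card_fin]
  have hAc : ((‖x‖:ℝ) ^ 2) ^ (-(n:ℤ) - 1) * (‖x‖ ^ 2) = (‖x‖ ^ 2) ^ (-(n:ℤ)) := by
    rw [← zpow_add_one₀ hA]; norm_num
  have hA1 : ((‖x‖:ℝ) ^ 2) ^ ((1:ℤ) - n - 1) = (‖x‖ ^ 2) ^ (-(n:ℤ)) := by
    congr 1; ring
  simp only [Finset.mem_univ, if_true, nsmul_eq_mul, hA1]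
  push_cast
  linear_combination (4 * (n:ℝ) * x i) * hAc
end

section
/- Let M = {(x,y,z) ∈ ℝ³ : x²+y² > 4}, φ(x,y,z) = (√(x²+y²), z), and p(x,y,z) = ln(x²+y²)/ln 2. Then the weight w = |dφ|^{p−2} equals √2^{p−2} = (x²+y²)^{1/2}/2, and the p(·)-tension field τ_{p(·)}(φ) = (div(w∇φ₁), div(w∇φ₂)) is the constant vector (1, 0) on M. In particular φ is not p(·)-harmonic but τ_{p(·)}(φ) is parallel. -/
noncomputable abbrev E3 := EuclideanSpace ℝ (Fin 3)

@[simp] lemma proj_apply3 (i : Fin 3) (x : E3) : EuclideanSpace.proj i x = x i := rfl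

lemma weight_eq (s : ℝ) (hs : 0 < s) :
    Real.sqrt 2 ^ (Real.log s / Real.log 2 - 2 : ℝ) = Real.sqrt s / 2 := by
  have h2 : (0:ℝ) < Real.sqrt 2 := Real.sqrt_pos.mpr (by norm_num)
  have hl2 : Real.log 2 ≠ 0 := ne_of_gt (Real.log_pos (by norm_num))
  rw [Real.rpow_def_of_pos h2, Real.log_sqrt (by norm_num)]
  have : Real.log 2 / 2 * (Real.log s / Real.log 2 - 2) = Real.log (Real.sqrt s) - Real.log 2 := by
    rw [Real.log_sqrt hs.le]; field_simp
  rw [this, Real.exp_sub, Real.exp_log (Real.sqrt_pos.mpr hs), Real.exp_log (by norm_num)]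

lemma grad_phi1 (y : E3) (hs : 0 < (y 0)^2 + (y 1)^2) :
    HasGradientAt (fun z : E3 => Real.sqrt ((z 0)^2 + (z 1)^2))
      ((y 0 / Real.sqrt ((y 0)^2 + (y 1)^2)) • EuclideanSpace.single 0 (1:ℝ) +
       (y 1 / Real.sqrt ((y 0)^2 + (y 1)^2)) • EuclideanSpace.single 1 (1:ℝ)) y := by
  set s := (y 0)^2 + (y 1)^2 with hsdef
  have hr : Real.sqrt s ≠ 0 := ne_of_gt (Real.sqrt_pos.mpr hs)
  have h0 : HasFDerivAt (fun z : E3 => z 0) (EuclideanSpace.proj 0 : E3 →L[ℝ] ℝ) y :=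
    (EuclideanSpace.proj (0 : Fin 3) : E3 →L[ℝ] ℝ).hasFDerivAt
  have h1 : HasFDerivAt (fun z : E3 => z 1) (EuclideanSpace.proj 1 : E3 →L[ℝ] ℝ) y :=
    (EuclideanSpace.proj (1 : Fin 3) : E3 →L[ℝ] ℝ).hasFDerivAt
  have hg : HasFDerivAt (fun z : E3 => (z 0)^2 + (z 1)^2)
      ((y 0 • (EuclideanSpace.proj 0 : E3 →L[ℝ] ℝ) + y 0 • (EuclideanSpace.proj 0 : E3 →L[ℝ] ℝ))
        + (y 1 • (EuclideanSpace.proj 1 : E3 →L[ℝ] ℝ) + y 1 • (EuclideanSpace.proj 1 : E3 →L[ℝ] ℝ))) y := by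
    simp only [pow_two]
    exact (h0.mul h0).add (h1.mul h1)
  have hsq : HasDerivAt Real.sqrt (1 / (2 * Real.sqrt s)) s := Real.hasDerivAt_sqrt (ne_of_gt hs)
  have hF := hsq.comp_hasFDerivAt y hg
  rw [hasGradientAt_iff_hasFDerivAt]
  refine hF.congr_fderiv ?_
  ext u
  simp [InnerProductSpace.toDual_apply_apply, inner_add_left, real_inner_smul_left,
    EuclideanSpace.inner_single_left]
  field_simp
  ring

lemma grad_phi2 (y : E3) :
    HasGradientAt (fun z : E3 => z 2) (EuclideanSpace.single 2 (1:ℝ)) y := by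
  rw [hasGradientAt_iff_hasFDerivAt]
  have h2 : HasFDerivAt (fun z : E3 => z 2) (EuclideanSpace.proj 2 : E3 →L[ℝ] ℝ) y :=
    (EuclideanSpace.proj (2 : Fin 3) : E3 →L[ℝ] ℝ).hasFDerivAt
  refine h2.congr_fderiv ?_
  ext u
  simp [InnerProductSpace.toDual_apply_apply, EuclideanSpace.inner_single_left]

/-- On `M = {(x,y,z) : x²+y² > 4}` with `φ(x,y,z) = (√(x²+y²), z)` and
`p = ln(x²+y²)/ln 2`, the weight `w = |dφ|^{p−2} = √2^{p−2}` equals `√(x²+y²)/2`, and the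
`p(·)`-tension field `(div(w∇φ₁), div(w∇φ₂))` is the constant vector `(1,0)`. -/
theorem stmt_11 (q : EuclideanSpace ℝ (Fin 3)) (hq : (q 0) ^ 2 + (q 1) ^ 2 > 4)
    (p w : EuclideanSpace ℝ (Fin 3) → ℝ)
    (hp : ∀ y, p y = Real.log ((y 0) ^ 2 + (y 1) ^ 2) / Real.log 2)
    (hw : ∀ y, w y = Real.sqrt 2 ^ (p y - 2)) :
    w q = Real.sqrt ((q 0) ^ 2 + (q 1) ^ 2) / 2 ∧
    (∑ j, fderiv ℝ
        (fun y : EuclideanSpace ℝ (Fin 3) =>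
          w y • gradient (fun z : EuclideanSpace ℝ (Fin 3) => Real.sqrt ((z 0) ^ 2 + (z 1) ^ 2)) y)
        q (EuclideanSpace.single j 1) j = 1) ∧
    (∑ j, fderiv ℝ
        (fun y : EuclideanSpace ℝ (Fin 3) =>
          w y • gradient (fun z : EuclideanSpace ℝ (Fin 3) => z 2) y)
        q (EuclideanSpace.single j 1) j = 0) := by
  -- the open domain
  have hUopen : IsOpen {y : E3 | 4 < (y 0)^2 + (y 1)^2} := by
    apply isOpen_lt continuous_const
    fun_prop
  have hqU : q ∈ {y : E3 | 4 < (y 0)^2 + (y 1)^2} := hq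
  have hnhds : {y : E3 | 4 < (y 0)^2 + (y 1)^2} ∈ nhds q := hUopen.mem_nhds hqU
  -- weight formula, valid on the whole domain
  have hwval : ∀ y : E3, 0 < (y 0)^2 + (y 1)^2 →
      w y = Real.sqrt ((y 0)^2 + (y 1)^2) / 2 := by
    intro y hy
    rw [hw, hp, weight_eq _ hy]
  have hqpos : (0:ℝ) < (q 0)^2 + (q 1)^2 := lt_trans (by norm_num) hq
  refine ⟨hwval q hqpos, ?_, ?_⟩
  · -- first divergence
    set T : E3 →L[ℝ] E3 :=
      ((1:ℝ)/2) • ((EuclideanSpace.proj (0 : Fin 3)).smulRight (EuclideanSpace.single 0 (1:ℝ))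
        + (EuclideanSpace.proj (1 : Fin 3)).smulRight (EuclideanSpace.single 1 (1:ℝ))) with hT
    have heq : (fun y : E3 =>
        w y • gradient (fun z : E3 => Real.sqrt ((z 0)^2 + (z 1)^2)) y) =ᶠ[nhds q] ⇑T := by
      filter_upwards [hnhds] with y hy
      have hypos : (0:ℝ) < (y 0)^2 + (y 1)^2 := lt_trans (by norm_num) hy
      have hr : Real.sqrt ((y 0)^2 + (y 1)^2) ≠ 0 := ne_of_gt (Real.sqrt_pos.mpr hypos)
      rw [(grad_phi1 y hypos).gradient, hwval y hypos]
      simp only [hT, ContinuousLinearMap.smul_apply, ContinuousLinearMap.add_apply,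
        ContinuousLinearMap.smulRight_apply, proj_apply3, smul_add, smul_smul]
      congr 1 <;> congr 1 <;> field_simp <;> ring
    rw [Filter.EventuallyEq.fderiv_eq heq, T.fderiv]
    rw [Fin.sum_univ_three]
    simp [hT, ContinuousLinearMap.smul_apply, ContinuousLinearMap.add_apply,
      ContinuousLinearMap.smulRight_apply, proj_apply3,
      EuclideanSpace.single_apply]
    norm_num
  · -- second divergence
    have hgrad2 : ∀ y : E3, gradient (fun z : E3 => z 2) y = EuclideanSpace.single 2 (1:ℝ) :=
      fun y => (grad_phi2 y).gradient
    -- closed form on the neighborhood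
    have heq : (fun y : E3 => w y • gradient (fun z : E3 => z 2) y) =ᶠ[nhds q]
        (fun y : E3 => Real.sqrt ((y 0)^2 + (y 1)^2) • ((2:ℝ)⁻¹ • EuclideanSpace.single 2 (1:ℝ))) := by
      filter_upwards [hnhds] with y hy
      have hypos : (0:ℝ) < (y 0)^2 + (y 1)^2 := lt_trans (by norm_num) hy
      rw [hgrad2, hwval y hypos, smul_smul, ← div_eq_mul_inv]
    rw [Filter.EventuallyEq.fderiv_eq heq]
    -- derivative of the scalar factor
    have hF := (grad_phi1 q hqpos).hasFDerivAt.smul_const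
      ((2:ℝ)⁻¹ • EuclideanSpace.single (2 : Fin 3) (1:ℝ))
    rw [hF.fderiv, Fin.sum_univ_three]
    simp [ContinuousLinearMap.smulRight_apply, InnerProductSpace.toDual_apply_apply,
      inner_add_left, real_inner_smul_left, EuclideanSpace.inner_single_left,
      EuclideanSpace.single_apply]
end
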